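/- If a category C has the Ramsey property for morphisms and all morphisms of C are monic, then every object of C is rigid (i.e., its only automorphism is the identity). Specifically, if some object A has an automorphism α ≠ id_A, then for every object C there exists a 2-coloring of hom(A, C) such that no morphism w : A → C makes w · hom(A, A) monochromatic. -/

import Mathlib

open CategoryTheory

/-- The hom-version Ramsey arrow. -/
def homArrow {C : Type*} [Category C] (A B C0 : C) (k : Nat) : Prop :=
  Nonempty (A ⟶ B) ∧ Nonempty (B ⟶ C0) ∧
    ∀ χ : (A ⟶ C0) → Fin k, ∃ (i : Fin k) (w : B ⟶ C0),
      ∀ f : A ⟶ B, χ (f ≫ w) = i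

/-- Ramsey property for morphisms. -/
def RamseyMor (C : Type*) [Category C] : Prop :=
  ∀ k : Nat, 2 ≤ k → ∀ A B : C, Nonempty (A ⟶ B) →
    ∃ C0 : C, homArrow A B C0 k

/-- `f ∼_A f'` iff `f' = f ∘ α` for some automorphism `α` of `A`. -/
def subRel {C : Type*} [Category C] {A B : C} (f f' : A ⟶ B) : Prop :=
  ∃ α : A ≅ A, f' = α.hom ≫ f

/-- The object-version (subobject) Ramsey arrow. -/
def objArrow {C : Type*} [Category C] (A B C0 : C) (k : Nat) : Prop :=
  Nonempty (A ⟶ B) ∧ Nonempty (B ⟶ C0) ∧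
    ∀ χ : Quot (subRel (A := A) (B := C0)) → Fin k,
      ∃ (i : Fin k) (w : B ⟶ C0),
        ∀ f : A ⟶ B, χ (Quot.mk _ (f ≫ w)) = i

/-- Ramsey property for objects. -/
def RamseyObj (C : Type*) [Category C] : Prop :=
  ∀ k : Nat, 2 ≤ k → ∀ A B : C, Nonempty (A ⟶ B) →
    ∃ C0 : C, objArrow A B C0 k

lemma key {C : Type*} [Category C]
    (hmono : ∀ {X Y : C} (f : X ⟶ Y), Mono f)
    (A : C) (α : A ≅ A) (hα : α.hom ≠ 𝟙 A) (C0 : C) :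
    ∃ χ : (A ⟶ C0) → Fin 2,
      ∀ w : A ⟶ C0, ∃ f g : A ⟶ A, χ (f ≫ w) ≠ χ (g ≫ w) := by
  classical
  set a : Aut A := α with ha
  have hone : ((1 : Aut A).hom : A ⟶ A) = 𝟙 A := rfl
  have hmul : ∀ (m n : ℤ) (h : A ⟶ C0),
      ((a ^ m).hom : A ⟶ A) ≫ ((a ^ n).hom ≫ h) = ((a ^ (n + m)).hom) ≫ h := by
    intro m n h
    rw [zpow_add, Aut.Aut_mul_def]
    exact (Category.assoc _ _ _).symm
  let s : Setoid (A ⟶ C0) :=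
    ⟨fun h h' => ∃ n : ℤ, h' = (a ^ n).hom ≫ h, by
      constructor
      · intro h; exact ⟨0, by simp [hone]⟩
      · rintro h h' ⟨n, rfl⟩
        refine ⟨-n, ?_⟩
        rw [hmul]; simp [hone]
      · rintro h h' h'' ⟨n, rfl⟩ ⟨m, rfl⟩
        exact ⟨n + m, (hmul m n h)⟩⟩
  let χ : (A ⟶ C0) → Fin 2 := fun h =>
    if h = (Quotient.mk s h).out then 0 else 1
  refine ⟨χ, fun w => ?_⟩
  set r : (A ⟶ C0) := (Quotient.mk s w).out with hr
  have hrw : (Quotient.mk s r) = Quotient.mk s w := Quotient.out_eq _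
  obtain ⟨n, hn⟩ : ∃ n : ℤ, w = (a ^ n).hom ≫ r := Quotient.exact hrw
  refine ⟨(a ^ (-n)).hom, α.hom ≫ (a ^ (-n)).hom, ?_⟩
  have hfw : (a ^ (-n)).hom ≫ w = r := by
    rw [hn, hmul]; simp [hone]
  have hTr : α.hom ≫ r ≠ r := by
    intro h
    have : α.hom ≫ r = 𝟙 A ≫ r := by simpa using h
    exact hα ((cancel_mono r).mp (by simpa using this))
  have hrel : s.r r (α.hom ≫ r) := ⟨1, by rw [zpow_one]⟩
  have hclass : Quotient.mk s (α.hom ≫ r) = Quotient.mk s w :=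
    (Quotient.sound hrel).symm.trans hrw
  have h1 : χ ((a ^ (-n)).hom ≫ w) = 0 := by
    rw [hfw]
    simp only [χ, hrw, ← hr]
    simp
  have h2 : χ ((α.hom ≫ (a ^ (-n)).hom) ≫ w) = 1 := by
    have heq : (α.hom ≫ (a ^ (-n)).hom) ≫ w = α.hom ≫ r := by
      rw [Category.assoc, hfw]
    rw [heq]
    simp only [χ, hclass, ← hr]
    exact if_neg hTr
  rw [h1, h2]; decide

theorem stmt0 {C : Type*} [Category C]
    (hmono : ∀ {X Y : C} (f : X ⟶ Y), Mono f)
    (hR : RamseyMor C) :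
    (∀ (A : C) (α : A ≅ A), α = Iso.refl A) ∧
    (∀ (A : C) (α : A ≅ A), α.hom ≠ 𝟙 A →
      ∀ C0 : C, ∃ χ : (A ⟶ C0) → Fin 2,
        ∀ w : A ⟶ C0, ∃ f g : A ⟶ A, χ (f ≫ w) ≠ χ (g ≫ w)) := by
  have part2 : ∀ (A : C) (α : A ≅ A), α.hom ≠ 𝟙 A →
      ∀ C0 : C, ∃ χ : (A ⟶ C0) → Fin 2,
        ∀ w : A ⟶ C0, ∃ f g : A ⟶ A, χ (f ≫ w) ≠ χ (g ≫ w) :=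
    fun A α hα C0 => key hmono A α hα C0
  refine ⟨fun A α => ?_, part2⟩
  by_contra hne
  have hα : α.hom ≠ 𝟙 A := fun h => hne (Iso.ext h)
  obtain ⟨C0, -, -, hC0⟩ := hR 2 le_rfl A A ⟨𝟙 A⟩
  obtain ⟨χ, hχ⟩ := part2 A α hα C0
  obtain ⟨i, w, hw⟩ := hC0 χ
  obtain ⟨f, g, hfg⟩ := hχ w
  exact hfg ((hw f).trans (hw g).symm)
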